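/- Let G' be a connected simple graph with a distinguished vertex w, and let G be the connected graph obtained from G' by attaching k ≥ 2 new pendant vertices, labeled 1,…,k, each adjacent only to w. Let Δ be the distance squared matrix of G and let Δ_{k+1} be the distance squared matrix of G \ {1,…,k} = G'. Then either i_-(Δ) = (k − 1) + i_-(Δ_{k+1}) or i_-(Δ) = k + i_-(Δ_{k+1}). -/

import Mathlib

open Matrix

/-- The distance squared matrix of a graph. -/
noncomputable def distSqMatrix {V : Type*} [Fintype V] (G : SimpleGraph V) :
    Matrix V V ℝ := Matrix.of fun i j => ((G.dist i j : ℝ)) ^ 2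

/-- number of positive eigenvalues (with multiplicity) of a real symmetric matrix -/
noncomputable def iPos {V : Type*} [Fintype V] [DecidableEq V] (M : Matrix V V ℝ) : ℕ :=
  if h : M.IsHermitian then (Finset.univ.filter fun i => 0 < h.eigenvalues i).card else 0

/-- number of negative eigenvalues (with multiplicity) of a real symmetric matrix -/
noncomputable def iNeg {V : Type*} [Fintype V] [DecidableEq V] (M : Matrix V V ℝ) : ℕ :=
  if h : M.IsHermitian then (Finset.univ.filter fun i => h.eigenvalues i < 0).card else 0

/-- multiplicity of 0 as an eigenvalue of a real symmetric matrix -/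
noncomputable def iZero {V : Type*} [Fintype V] [DecidableEq V] (M : Matrix V V ℝ) : ℕ :=
  if h : M.IsHermitian then (Finset.univ.filter fun i => h.eigenvalues i = 0).card else 0

set_option linter.unusedSectionVars false
set_option linter.unusedVariables false
set_option maxHeartbeats 1000000

section Spectral
variable {V : Type*} [Fintype V] [DecidableEq V]

lemma quad_eq (M : Matrix V V ℝ) (hM : M.IsHermitian) (x : V → ℝ) :
    x ⬝ᵥ M *ᵥ x = ∑ i, hM.eigenvalues i *
      ((star (hM.eigenvectorUnitary : Matrix V V ℝ)) *ᵥ x) i ^ 2 := by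
  have h1 : M = (hM.eigenvectorUnitary : Matrix V V ℝ) * diagonal hM.eigenvalues *
      star (hM.eigenvectorUnitary : Matrix V V ℝ) := by
    have := hM.spectral_theorem
    simpa using this
  have hUT : star (hM.eigenvectorUnitary : Matrix V V ℝ) =
      (hM.eigenvectorUnitary : Matrix V V ℝ)ᵀ := by
    rw [star_eq_conjTranspose]; ext i j; simp [conjTranspose_apply]
  conv_lhs => rw [h1]
  rw [← mulVec_mulVec, ← mulVec_mulVec, dotProduct_mulVec]
  have h2 : x ᵥ* (hM.eigenvectorUnitary : Matrix V V ℝ) =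
      star (hM.eigenvectorUnitary : Matrix V V ℝ) *ᵥ x := by
    rw [hUT, ← vecMul_transpose, transpose_transpose]
  rw [h2]
  simp [dotProduct, mulVec_diagonal]
  exact Finset.sum_congr rfl fun i _ => by ring

lemma starU_mulVec_inj (M : Matrix V V ℝ) (hM : M.IsHermitian) {x : V → ℝ}
    (h : (star (hM.eigenvectorUnitary : Matrix V V ℝ)) *ᵥ x = 0) : x = 0 := by
  have h2 : (hM.eigenvectorUnitary : Matrix V V ℝ) *ᵥ
      ((star (hM.eigenvectorUnitary : Matrix V V ℝ)) *ᵥ x) = x := by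
    rw [mulVec_mulVec, (Matrix.mem_unitaryGroup_iff).mp hM.eigenvectorUnitary.2, one_mulVec]
  rw [h, mulVec_zero] at h2
  exact h2.symm

lemma U_mulVec_starU (M : Matrix V V ℝ) (hM : M.IsHermitian) (z : V → ℝ) :
    (star (hM.eigenvectorUnitary : Matrix V V ℝ)) *ᵥ
      ((hM.eigenvectorUnitary : Matrix V V ℝ) *ᵥ z) = z := by
  rw [mulVec_mulVec, (Matrix.mem_unitaryGroup_iff').mp hM.eigenvectorUnitary.2, one_mulVec]

/-- extend by zero, as a linear map -/
noncomputable def extZero (pr : V → Prop) [DecidablePred pr] :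
    ({i // pr i} → ℝ) →ₗ[ℝ] (V → ℝ) where
  toFun c := fun i => if h : pr i then c ⟨i, h⟩ else 0
  map_add' a b := by ext i; by_cases h : pr i <;> simp [h]
  map_smul' r a := by ext i; by_cases h : pr i <;> simp [h]

lemma extZero_inj (pr : V → Prop) [DecidablePred pr] : Function.Injective (extZero pr) := by
  intro a b hab
  ext ⟨i, hi⟩
  have := congrFun hab i
  simpa [extZero, hi] using this

lemma extZero_apply (pr : V → Prop) [DecidablePred pr] (c : {i // pr i} → ℝ) (i : V) :
    extZero pr c i = if h : pr i then c ⟨i, h⟩ else 0 := rfl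

lemma iNeg_eq (M : Matrix V V ℝ) (hM : M.IsHermitian) :
    iNeg M = Fintype.card {i // hM.eigenvalues i < 0} := by
  rw [iNeg, dif_pos hM, Fintype.card_subtype]

/-- restriction of coordinates in the eigenbasis, domain-restricted to W -/
noncomputable def coordMap (M : Matrix V V ℝ) (hM : M.IsHermitian) (pr : V → Prop)
    [DecidablePred pr] (W : Submodule ℝ (V → ℝ)) : W →ₗ[ℝ] ({i // pr i} → ℝ) :=
  ((LinearMap.funLeft ℝ ℝ (Subtype.val : {i // pr i} → V)).comp
    (Matrix.mulVecLin (star (hM.eigenvectorUnitary : Matrix V V ℝ)))).domRestrict W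

lemma coordMap_apply (M : Matrix V V ℝ) (hM : M.IsHermitian) (pr : V → Prop)
    [DecidablePred pr] (W : Submodule ℝ (V → ℝ)) (x : W) (i : {i // pr i}) :
    coordMap M hM pr W x = fun i => ((star (hM.eigenvectorUnitary : Matrix V V ℝ)) *ᵥ
      (x : V → ℝ)) i.1 := rfl

lemma finrank_le_of_negdef (M : Matrix V V ℝ) (hM : M.IsHermitian)
    (W : Submodule ℝ (V → ℝ)) (hW : ∀ x ∈ W, x ≠ 0 → x ⬝ᵥ M *ᵥ x < 0) :
    Module.finrank ℝ W ≤ iNeg M := by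
  classical
  rw [iNeg_eq M hM]
  have hinj : Function.Injective (coordMap M hM (fun i => hM.eigenvalues i < 0) W) := by
    rw [← LinearMap.ker_eq_bot, LinearMap.ker_eq_bot']
    intro ⟨x, hx⟩ hx0
    have hy : ∀ i : {i // hM.eigenvalues i < 0},
        ((star (hM.eigenvectorUnitary : Matrix V V ℝ)) *ᵥ x) i.1 = 0 := by
      intro i
      exact congrFun hx0 i
    have hq : (0:ℝ) ≤ x ⬝ᵥ M *ᵥ x := by
      rw [quad_eq M hM]
      apply Finset.sum_nonneg
      intro i _
      by_cases h : hM.eigenvalues i < 0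
      · rw [hy ⟨i, h⟩]; simp
      · exact mul_nonneg (le_of_not_gt h) (sq_nonneg _)
    have : x = 0 := by
      by_contra hne
      exact absurd hq (not_le.mpr (hW x hx hne))
    exact Subtype.ext this
  calc Module.finrank ℝ W ≤ Module.finrank ℝ ({i // hM.eigenvalues i < 0} → ℝ) :=
        LinearMap.finrank_le_finrank_of_injective hinj
    _ = Fintype.card {i // hM.eigenvalues i < 0} := Module.finrank_pi ℝ

lemma finrank_add_iNeg_le_of_psd (M : Matrix V V ℝ) (hM : M.IsHermitian)
    (W : Submodule ℝ (V → ℝ)) (hW : ∀ x ∈ W, 0 ≤ x ⬝ᵥ M *ᵥ x) :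
    Module.finrank ℝ W + iNeg M ≤ Fintype.card V := by
  classical
  have hinj : Function.Injective (coordMap M hM (fun i => 0 ≤ hM.eigenvalues i) W) := by
    rw [← LinearMap.ker_eq_bot, LinearMap.ker_eq_bot']
    intro ⟨x, hx⟩ hx0
    have hy : ∀ i : V, 0 ≤ hM.eigenvalues i →
        ((star (hM.eigenvectorUnitary : Matrix V V ℝ)) *ᵥ x) i = 0 := by
      intro i hi
      exact congrFun hx0 ⟨i, hi⟩
    have hq : x ⬝ᵥ M *ᵥ x ≤ 0 := by
      rw [quad_eq M hM]
      apply Finset.sum_nonpos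
      intro i _
      by_cases h : 0 ≤ hM.eigenvalues i
      · rw [hy i h]; simp
      · exact mul_nonpos_of_nonpos_of_nonneg (le_of_not_ge h) (sq_nonneg _)
    have hq0 : x ⬝ᵥ M *ᵥ x = 0 := le_antisymm hq (hW x hx)
    have hall : ∀ i ∈ Finset.univ, hM.eigenvalues i *
        ((star (hM.eigenvectorUnitary : Matrix V V ℝ)) *ᵥ x) i ^ 2 = 0 := by
      rw [quad_eq M hM] at hq0
      refine (Finset.sum_eq_zero_iff_of_nonpos ?_).mp hq0
      intro i _
      by_cases h : 0 ≤ hM.eigenvalues i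
      · rw [hy i h]; simp
      · exact mul_nonpos_of_nonpos_of_nonneg (le_of_not_ge h) (sq_nonneg _)
    have hzero : (star (hM.eigenvectorUnitary : Matrix V V ℝ)) *ᵥ x = 0 := by
      ext i
      by_cases h : 0 ≤ hM.eigenvalues i
      · exact hy i h
      · have := hall i (Finset.mem_univ i)
        have hne : hM.eigenvalues i ≠ 0 := fun hc => h (le_of_eq hc.symm)
        have := mul_eq_zero.mp this
        rcases this with h1 | h2
        · exact absurd h1 hne
        · exact pow_eq_zero_iff (by norm_num) |>.mp h2
    exact Subtype.ext (starU_mulVec_inj M hM hzero)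
  have h1 : Module.finrank ℝ W ≤ Fintype.card {i // 0 ≤ hM.eigenvalues i} := by
    calc Module.finrank ℝ W ≤ Module.finrank ℝ ({i // 0 ≤ hM.eigenvalues i} → ℝ) :=
          LinearMap.finrank_le_finrank_of_injective hinj
      _ = _ := Module.finrank_pi ℝ
  have h2 := Finset.card_filter_add_card_filter_not (s := Finset.univ)
    (p := fun i => 0 ≤ hM.eigenvalues i)
  simp only [not_le, Finset.card_univ] at h2
  rw [Fintype.card_subtype] at h1
  rw [iNeg_eq M hM, Fintype.card_subtype]
  omega

lemma exists_negdef (M : Matrix V V ℝ) (hM : M.IsHermitian) :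
    ∃ W : Submodule ℝ (V → ℝ), Module.finrank ℝ W = iNeg M ∧
      (∀ x ∈ W, x ≠ 0 → x ⬝ᵥ M *ᵥ x < 0) := by
  classical
  set pr := fun i => hM.eigenvalues i < 0 with hpr
  set L := (Matrix.mulVecLin (hM.eigenvectorUnitary : Matrix V V ℝ)).comp (extZero pr) with hL
  have hLinj : Function.Injective L := by
    intro a b hab
    apply extZero_inj pr
    have : (star (hM.eigenvectorUnitary : Matrix V V ℝ)) *ᵥ
        ((hM.eigenvectorUnitary : Matrix V V ℝ) *ᵥ extZero pr a) =
        (star (hM.eigenvectorUnitary : Matrix V V ℝ)) *ᵥ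
        ((hM.eigenvectorUnitary : Matrix V V ℝ) *ᵥ extZero pr b) := by
      simp only [hL, LinearMap.comp_apply, Matrix.mulVecLin_apply] at hab
      rw [hab]
    rwa [U_mulVec_starU, U_mulVec_starU] at this
  refine ⟨LinearMap.range L, ?_, ?_⟩
  · rw [LinearMap.finrank_range_of_inj hLinj, Module.finrank_pi ℝ, iNeg_eq M hM]
  · rintro x ⟨c, rfl⟩ hne
    have hcne : c ≠ 0 := fun hc => hne (by rw [hc, map_zero])
    have hy : (star (hM.eigenvectorUnitary : Matrix V V ℝ)) *ᵥ (L c) = extZero pr c := by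
      simp only [hL, LinearMap.comp_apply, Matrix.mulVecLin_apply]
      exact U_mulVec_starU M hM _
    rw [quad_eq M hM, hy]
    obtain ⟨i0, hi0⟩ : ∃ i, c i ≠ 0 := Function.ne_iff.mp hcne
    have : ∑ i, hM.eigenvalues i * (extZero pr c) i ^ 2 < ∑ _i : V, (0:ℝ) := by
      apply Finset.sum_lt_sum
      · intro i _
        rw [extZero_apply]
        by_cases h : pr i
        · simp only [dif_pos h]
          exact mul_nonpos_of_nonpos_of_nonneg (le_of_lt h) (sq_nonneg _)
        · simp [dif_neg h]
      · refine ⟨i0.1, Finset.mem_univ _, ?_⟩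
        rw [extZero_apply, dif_pos i0.2]
        have h1 : hM.eigenvalues i0.1 < 0 := i0.2
        have h2 : (0:ℝ) < c ⟨i0.1, i0.2⟩ ^ 2 := by
          have : c ⟨i0.1, i0.2⟩ = c i0 := by congr
          rw [this]
          positivity
        exact mul_neg_of_neg_of_pos h1 h2
    simpa using this

lemma exists_psd (M : Matrix V V ℝ) (hM : M.IsHermitian) :
    ∃ W : Submodule ℝ (V → ℝ), Module.finrank ℝ W + iNeg M = Fintype.card V ∧
      (∀ x ∈ W, 0 ≤ x ⬝ᵥ M *ᵥ x) := by
  classical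
  set pr := fun i => 0 ≤ hM.eigenvalues i with hpr
  set L := (Matrix.mulVecLin (hM.eigenvectorUnitary : Matrix V V ℝ)).comp (extZero pr) with hL
  have hLinj : Function.Injective L := by
    intro a b hab
    apply extZero_inj pr
    have : (star (hM.eigenvectorUnitary : Matrix V V ℝ)) *ᵥ
        ((hM.eigenvectorUnitary : Matrix V V ℝ) *ᵥ extZero pr a) =
        (star (hM.eigenvectorUnitary : Matrix V V ℝ)) *ᵥ
        ((hM.eigenvectorUnitary : Matrix V V ℝ) *ᵥ extZero pr b) := by
      simp only [hL, LinearMap.comp_apply, Matrix.mulVecLin_apply] at hab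
      rw [hab]
    rwa [U_mulVec_starU, U_mulVec_starU] at this
  refine ⟨LinearMap.range L, ?_, ?_⟩
  · rw [LinearMap.finrank_range_of_inj hLinj, Module.finrank_pi ℝ, iNeg_eq M hM,
      Fintype.card_subtype, Fintype.card_subtype]
    have := Finset.card_filter_add_card_filter_not (s := Finset.univ) (p := pr)
    simp only [hpr, not_le, Finset.card_univ] at this ⊢
    convert this using 3
  · rintro x ⟨c, rfl⟩
    have hy : (star (hM.eigenvectorUnitary : Matrix V V ℝ)) *ᵥ (L c) = extZero pr c := by
      simp only [hL, LinearMap.comp_apply, Matrix.mulVecLin_apply]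
      exact U_mulVec_starU M hM _
    rw [quad_eq M hM, hy]
    apply Finset.sum_nonneg
    intro i _
    rw [extZero_apply]
    by_cases h : pr i
    · simp only [dif_pos h]
      exact mul_nonneg h (sq_nonneg _)
    · simp [dif_neg h]

end Spectral

section Glue
variable {α β γ : Type*}

/-- glue a pair of functions along an equivalence with a sum type -/
noncomputable def glue (e : α ⊕ β ≃ γ) : ((α → ℝ) × (β → ℝ)) →ₗ[ℝ] (γ → ℝ) where
  toFun cu := fun a => Sum.elim cu.1 cu.2 (e.symm a)
  map_add' a b := by ext x; cases h : e.symm x <;> simp [h]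
  map_smul' r a := by ext x; cases h : e.symm x <;> simp [h]

lemma glue_inl (e : α ⊕ β ≃ γ) (c : α → ℝ) (u : β → ℝ) (a : α) :
    glue e (c, u) (e (Sum.inl a)) = c a := by simp [glue]

lemma glue_inr (e : α ⊕ β ≃ γ) (c : α → ℝ) (u : β → ℝ) (b : β) :
    glue e (c, u) (e (Sum.inr b)) = u b := by simp [glue]

lemma glue_inj (e : α ⊕ β ≃ γ) : Function.Injective (glue e) := by
  rintro ⟨c, u⟩ ⟨c', u'⟩ h
  have h1 : c = c' := by
    funext a
    have := congrFun h (e (Sum.inl a))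
    rwa [glue_inl, glue_inl] at this
  have h2 : u = u' := by
    funext b
    have := congrFun h (e (Sum.inr b))
    rwa [glue_inr, glue_inr] at this
  simp [h1, h2]

/-- the product of two submodules is linearly equivalent to the product module -/
noncomputable def prodSubEquiv {R M N : Type*} [Ring R] [AddCommGroup M] [AddCommGroup N]
    [Module R M] [Module R N] (p : Submodule R M) (q : Submodule R N) :
    (p.prod q) ≃ₗ[R] (p × q) where
  toFun x := (⟨x.1.1, x.2.1⟩, ⟨x.1.2, x.2.2⟩)
  invFun y := ⟨(y.1.1, y.2.1), ⟨y.1.2, y.2.2⟩⟩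
  left_inv x := rfl
  right_inv y := rfl
  map_add' a b := rfl
  map_smul' r a := rfl

lemma finrank_prod_sub {M N : Type*} [AddCommGroup M] [AddCommGroup N]
    [Module ℝ M] [Module ℝ N] [FiniteDimensional ℝ M] [FiniteDimensional ℝ N]
    (p : Submodule ℝ M) (q : Submodule ℝ N) :
    Module.finrank ℝ (p.prod q) = Module.finrank ℝ p + Module.finrank ℝ q := by
  rw [LinearEquiv.finrank_eq (prodSubEquiv p q), Module.finrank_prod]


/-- the summation functional -/
noncomputable def sumLin (k : ℕ) : (Fin k → ℝ) →ₗ[ℝ] ℝ where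
  toFun c := ∑ i, c i
  map_add' a b := by simp [Finset.sum_add_distrib]
  map_smul' r a := by simp [Finset.mul_sum]

lemma finrank_ker_sumLin {k : ℕ} (hk : 2 ≤ k) :
    Module.finrank ℝ (LinearMap.ker (sumLin k)) = k - 1 := by
  have hsurj : Function.Surjective (sumLin k) := by
    intro r
    refine ⟨fun _ => r / k, ?_⟩
    show (∑ _i : Fin k, r / (k:ℝ)) = r
    rw [Finset.sum_const, Finset.card_univ, Fintype.card_fin, nsmul_eq_mul]
    have hkne : (k:ℝ) ≠ 0 := Nat.cast_ne_zero.mpr (by omega)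
    field_simp
  have h1 := LinearMap.finrank_range_add_finrank_ker (sumLin k)
  rw [LinearMap.range_eq_top.mpr hsurj, finrank_top, Module.finrank_self,
    Module.finrank_pi, Fintype.card_fin] at h1
  omega

end Glue

section Graph
variable {n k : ℕ} {G : SimpleGraph (Fin n)} {w : Fin n} {p : Fin k → Fin n}

lemma distSq_herm {V : Type*} [Fintype V] (G : SimpleGraph V) : (distSqMatrix G).IsHermitian := by
  ext i j
  simp [distSqMatrix, conjTranspose_apply, SimpleGraph.dist_comm]

lemma adj_pendant (hpend : ∀ i, G.neighborSet (p i) = {w}) {i : Fin k} {x : Fin n} :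
    G.Adj (p i) x ↔ x = w := by
  constructor
  · intro h
    have : x ∈ G.neighborSet (p i) := h
    rwa [hpend i, Set.mem_singleton_iff] at this
  · intro h
    rw [h, ← SimpleGraph.mem_neighborSet, hpend i]
    rfl

lemma step_off_pendant (hpend : ∀ i, G.neighborSet (p i) = {w}) {i : Fin k} {v : Fin n}
    (hv : v ≠ p i) (q : G.Walk (p i) v) :
    ∃ q' : G.Walk w v, q'.length + 1 = q.length := by
  cases q with
  | nil => exact absurd rfl hv
  | cons h q' =>
    rename_i x
    have hx : x = w := (adj_pendant hpend).mp h
    subst hx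
    exact ⟨q', by simp [SimpleGraph.Walk.length_cons]⟩

lemma dist_pendant_pendant (hG : G.Connected) (hp : Function.Injective p)
    (hw : ∀ i, p i ≠ w) (hpend : ∀ i, G.neighborSet (p i) = {w})
    {i j : Fin k} (hij : i ≠ j) : G.dist (p i) (p j) = 2 := by
  have hne : p i ≠ p j := fun h => hij (hp h)
  have hle : G.dist (p i) (p j) ≤ 2 := by
    have h1 : G.Adj (p i) w := (adj_pendant hpend).mpr rfl
    have h2 : G.Adj w (p j) := ((adj_pendant hpend).mpr rfl : G.Adj (p j) w).symm
    have := SimpleGraph.dist_le (SimpleGraph.Walk.cons h1 (SimpleGraph.Walk.cons h2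
      SimpleGraph.Walk.nil))
    simpa using this
  have h0 : 0 < G.dist (p i) (p j) := hG.pos_dist_of_ne hne
  have h1 : G.dist (p i) (p j) ≠ 1 := by
    intro h
    have := SimpleGraph.dist_eq_one_iff_adj.mp h
    exact hw j ((adj_pendant hpend).mp this)
  omega

lemma dist_pendant_other (hG : G.Connected) (hpend : ∀ i, G.neighborSet (p i) = {w})
    {i : Fin k} {v : Fin n} (hv : v ≠ p i) :
    G.dist (p i) v = 1 + G.dist w v := by
  have hle : G.dist (p i) v ≤ 1 + G.dist w v := by
    obtain ⟨q, hq⟩ := hG.exists_walk_length_eq_dist w v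
    have h1 : G.Adj (p i) w := (adj_pendant hpend).mpr rfl
    have h2 := SimpleGraph.dist_le (SimpleGraph.Walk.cons h1 q)
    rw [SimpleGraph.Walk.length_cons, hq] at h2
    omega
  have hge : 1 + G.dist w v ≤ G.dist (p i) v := by
    obtain ⟨q, hq⟩ := hG.exists_walk_length_eq_dist (p i) v
    obtain ⟨q', hq'⟩ := step_off_pendant hpend hv q
    have := SimpleGraph.dist_le q'
    omega
  omega

lemma shortest_walk_avoids (hG : G.Connected) (hpend : ∀ i, G.neighborSet (p i) = {w})
    {u v : Fin n} (hu : ∀ i, u ≠ p i) (hv : ∀ i, v ≠ p i)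
    (q : G.Walk u v) (hq : q.length = G.dist u v) :
    ∀ x ∈ q.support, ∀ i, x ≠ p i := by
  intro x hx i hxi
  subst hxi
  set t := q.takeUntil (p i) hx with ht
  set d := q.dropUntil (p i) hx with hd
  have hlen : t.length + d.length = q.length := by
    have := q.take_spec hx
    calc t.length + d.length = (t.append d).length := (SimpleGraph.Walk.length_append _ _).symm
      _ = q.length := by rw [this]
  obtain ⟨r, hr⟩ := step_off_pendant hpend (hu i) t.reverse
  obtain ⟨s, hs⟩ := step_off_pendant hpend (hv i) d
  have hrlen : r.length + 1 = t.length := by rwa [SimpleGraph.Walk.length_reverse] at hr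
  have := SimpleGraph.dist_le (r.reverse.append s)
  rw [SimpleGraph.Walk.length_append, SimpleGraph.Walk.length_reverse] at this
  omega

lemma walk_to_induce {S : Set (Fin n)} :
    ∀ {u v : Fin n} (q : G.Walk u v) (_ : ∀ x ∈ q.support, x ∈ S) (hu : u ∈ S) (hv : v ∈ S),
    ∃ Q : (G.induce S).Walk ⟨u, hu⟩ ⟨v, hv⟩, Q.length = q.length := by
  intro u v q
  induction q with
  | nil => intro _ hu hv; exact ⟨SimpleGraph.Walk.nil, rfl⟩
  | cons h q ih =>
    rename_i a b c
    intro hs ha hc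
    have hb : b ∈ S := hs b (by simp [SimpleGraph.Walk.support_cons])
    obtain ⟨Q, hQ⟩ := ih (fun x hx => hs x (by simp [SimpleGraph.Walk.support_cons, hx])) hb hc
    have hadj : (G.induce S).Adj ⟨a, ha⟩ ⟨b, hb⟩ := by
      simp only [SimpleGraph.comap_adj, Function.Embedding.coe_subtype]
      exact h
    exact ⟨SimpleGraph.Walk.cons hadj Q, by simp [hQ]⟩

lemma dist_induce (hG : G.Connected) (hpend : ∀ i, G.neighborSet (p i) = {w})
    (hG' : (G.induce {v : Fin n | ∀ i : Fin k, v ≠ p i}).Connected)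
    {u v : Fin n} (hu : ∀ i, u ≠ p i) (hv : ∀ i, v ≠ p i) :
    (G.induce {v : Fin n | ∀ i : Fin k, v ≠ p i}).dist ⟨u, hu⟩ ⟨v, hv⟩ = G.dist u v := by
  apply le_antisymm
  · obtain ⟨q, hq⟩ := hG.exists_walk_length_eq_dist u v
    have havoid := shortest_walk_avoids hG hpend hu hv q hq
    obtain ⟨Q, hQ⟩ := walk_to_induce q (fun x hx => havoid x hx) hu hv
    have h2 : (G.induce {x : Fin n | ∀ i : Fin k, x ≠ p i}).dist ⟨u, hu⟩ ⟨v, hv⟩ ≤ Q.length :=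
      SimpleGraph.dist_le Q
    omega
  · obtain ⟨Q, hQ⟩ := hG'.exists_walk_length_eq_dist ⟨u, hu⟩ ⟨v, hv⟩
    have := SimpleGraph.dist_le (Q.map (SimpleGraph.Embedding.induce {v : Fin n | ∀ i : Fin k, v ≠ p i}).toHom)
    rwa [SimpleGraph.Walk.length_map, hQ] at this

end Graph

theorem stmt1 {n k : ℕ} (hk : 2 ≤ k)
    (G : SimpleGraph (Fin n)) (hG : G.Connected)
    (w : Fin n) (p : Fin k → Fin n) (hp : Function.Injective p)
    (hw : ∀ i, p i ≠ w)
    (hpend : ∀ i, G.neighborSet (p i) = {w})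
    (hG' : (G.induce {v : Fin n | ∀ i : Fin k, v ≠ p i}).Connected) :
    iNeg (distSqMatrix G) =
      (k - 1) + iNeg (distSqMatrix (G.induce {v : Fin n | ∀ i : Fin k, v ≠ p i})) ∨
    iNeg (distSqMatrix G) =
      k + iNeg (distSqMatrix (G.induce {v : Fin n | ∀ i : Fin k, v ≠ p i})) := by
  classical
  set S : Set (Fin n) := {v : Fin n | ∀ i : Fin k, v ≠ p i} with hS
  have hHermG : (distSqMatrix G).IsHermitian := distSq_herm G
  have hHermS : (distSqMatrix (G.induce S)).IsHermitian := distSq_herm _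
  -- the sum decomposition of the vertex set
  have hfb : Function.Bijective (Sum.elim p (Subtype.val : ↥S → Fin n)) := by
    constructor
    · rintro (i | v) (j | v') h
      · simp only [Sum.elim_inl] at h
        rw [hp h]
      · simp only [Sum.elim_inl, Sum.elim_inr] at h
        exact absurd h.symm (v'.2 i)
      · simp only [Sum.elim_inl, Sum.elim_inr] at h
        exact absurd h (v.2 j)
      · simp only [Sum.elim_inr] at h
        rw [Subtype.ext h]
    · intro v
      by_cases h : ∀ i, v ≠ p i
      · exact ⟨Sum.inr ⟨v, h⟩, rfl⟩
      · push_neg at h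
        obtain ⟨i, hi⟩ := h
        exact ⟨Sum.inl i, hi.symm⟩
  set e : (Fin k ⊕ ↥S) ≃ Fin n := Equiv.ofBijective _ hfb with he
  have sum_split : ∀ g : Fin n → ℝ, ∑ a, g a = (∑ i, g (p i)) + ∑ v : ↥S, g v.1 := by
    intro g
    rw [← Equiv.sum_comp e g, Fintype.sum_sum_type]
    rfl
  have hcard : Fintype.card ↥S + k = n := by
    have h3 := Fintype.card_congr e
    rw [Fintype.card_sum, Fintype.card_fin, Fintype.card_fin] at h3
    omega
  -- the glue map and its evaluations
  have hΦ1 : ∀ (cu : (Fin k → ℝ) × (↥S → ℝ)) (i : Fin k), glue e cu (p i) = cu.1 i :=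
    fun cu i => glue_inl e cu.1 cu.2 i
  have hΦ2 : ∀ (cu : (Fin k → ℝ) × (↥S → ℝ)) (v : ↥S), glue e cu v.1 = cu.2 v :=
    fun cu v => glue_inr e cu.1 cu.2 v
  -- entry computations
  have hE0 : ∀ i, distSqMatrix G (p i) (p i) = 0 := by
    intro i
    show ((G.dist (p i) (p i) : ℝ)) ^ 2 = 0
    rw [SimpleGraph.dist_self]
    norm_num
  have hE4 : ∀ i j, i ≠ j → distSqMatrix G (p i) (p j) = 4 := by
    intro i j hij
    show ((G.dist (p i) (p j) : ℝ)) ^ 2 = 4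
    rw [dist_pendant_pendant hG hp hw hpend hij]
    norm_num
  have hEf : ∀ (i : Fin k) (v : ↥S), distSqMatrix G (p i) v.1
      = ((1 + G.dist w v.1 : ℕ) : ℝ) ^ 2 := by
    intro i v
    show ((G.dist (p i) v.1 : ℝ)) ^ 2 = _
    rw [dist_pendant_other hG hpend (v.2 i)]
  have hEsym : ∀ a b, distSqMatrix G a b = distSqMatrix G b a := by
    intro a b
    show ((G.dist a b : ℝ)) ^ 2 = ((G.dist b a : ℝ)) ^ 2
    rw [SimpleGraph.dist_comm]
  have hE' : ∀ v v' : ↥S, distSqMatrix G v.1 v'.1 = distSqMatrix (G.induce S) v v' := by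
    intro v v'
    have hd : (G.induce S).dist v v' = G.dist v.1 v'.1 :=
      dist_induce hG hpend hG' v.2 v'.2
    show ((G.dist v.1 v'.1 : ℝ)) ^ 2 = (((G.induce S).dist v v' : ℝ)) ^ 2
    rw [hd]
  -- the quadratic form evaluation
  have hquad : ∀ (c : Fin k → ℝ) (u : ↥S → ℝ), (∑ i, c i) = 0 →
      glue e (c, u) ⬝ᵥ (distSqMatrix G) *ᵥ glue e (c, u)
        = -4 * (∑ i, c i ^ 2) + u ⬝ᵥ (distSqMatrix (G.induce S)) *ᵥ u := by
    intro c u hc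
    have hq1 : glue e (c, u) ⬝ᵥ (distSqMatrix G) *ᵥ glue e (c, u)
        = ∑ a, glue e (c, u) a * ∑ b, distSqMatrix G a b * glue e (c, u) b := rfl
    have inner : ∀ a, (∑ b, distSqMatrix G a b * glue e (c, u) b)
        = (∑ j, distSqMatrix G a (p j) * c j) + ∑ v' : ↥S, distSqMatrix G a v'.1 * u v' := by
      intro a
      rw [sum_split (fun b => distSqMatrix G a b * glue e (c, u) b)]
      congr 1
      · exact Finset.sum_congr rfl fun j _ => by rw [hΦ1]
      · exact Finset.sum_congr rfl fun v' _ => by rw [hΦ2]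
    rw [hq1]
    simp only [inner]
    rw [sum_split (fun a => glue e (c, u) a *
      ((∑ j, distSqMatrix G a (p j) * c j) + ∑ v' : ↥S, distSqMatrix G a v'.1 * u v'))]
    simp only [hΦ1, hΦ2]
    -- four term computations
    have innerA : ∀ i, (∑ j, distSqMatrix G (p i) (p j) * c j) = -(4 * c i) := by
      intro i
      have hstep : ∀ j, distSqMatrix G (p i) (p j) * c j
          = 4 * c j - (if j = i then 4 * c i else 0) := by
        intro j
        by_cases h : j = i
        · subst h
          rw [hE0, if_pos rfl]
          ring
        · rw [hE4 i j (fun hh => h hh.symm), if_neg h]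
          ring
      rw [Finset.sum_congr rfl fun j _ => hstep j, Finset.sum_sub_distrib,
        ← Finset.mul_sum, hc, Finset.sum_ite_eq' Finset.univ i (fun _ => 4 * c i)]
      simp
    have innerB : ∀ i, (∑ v' : ↥S, distSqMatrix G (p i) v'.1 * u v')
        = ∑ v' : ↥S, ((1 + G.dist w v'.1 : ℕ) : ℝ) ^ 2 * u v' := by
      intro i
      exact Finset.sum_congr rfl fun v' _ => by rw [hEf i v']
    have innerC : ∀ v : ↥S, (∑ j, distSqMatrix G v.1 (p j) * c j) = 0 := by
      intro v
      have : ∀ j, distSqMatrix G v.1 (p j) * c j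
          = ((1 + G.dist w v.1 : ℕ) : ℝ) ^ 2 * c j := by
        intro j
        rw [hEsym, hEf j v]
      rw [Finset.sum_congr rfl fun j _ => this j, ← Finset.mul_sum, hc, mul_zero]
    have hfirst : (∑ i, c i * ((∑ j, distSqMatrix G (p i) (p j) * c j)
        + ∑ v' : ↥S, distSqMatrix G (p i) v'.1 * u v')) = -4 * ∑ i, c i ^ 2 := by
      have : ∀ i, c i * ((∑ j, distSqMatrix G (p i) (p j) * c j)
          + ∑ v' : ↥S, distSqMatrix G (p i) v'.1 * u v')
          = -(4 * c i ^ 2) + c i * (∑ v' : ↥S, ((1 + G.dist w v'.1 : ℕ) : ℝ) ^ 2 * u v') := by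
        intro i
        rw [innerA i, innerB i]
        ring
      rw [Finset.sum_congr rfl fun i _ => this i, Finset.sum_add_distrib,
        ← Finset.sum_mul, hc, zero_mul, add_zero]
      rw [Finset.mul_sum]
      exact Finset.sum_congr rfl fun i _ => by ring
    have hsecond : (∑ v : ↥S, u v * ((∑ j, distSqMatrix G v.1 (p j) * c j)
        + ∑ v' : ↥S, distSqMatrix G v.1 v'.1 * u v'))
        = u ⬝ᵥ (distSqMatrix (G.induce S)) *ᵥ u := by
      have hrhs : u ⬝ᵥ (distSqMatrix (G.induce S)) *ᵥ u
          = ∑ v : ↥S, u v * ∑ v' : ↥S, distSqMatrix (G.induce S) v v' * u v' := rfl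
      rw [hrhs]
      refine Finset.sum_congr rfl fun v _ => ?_
      rw [innerC v, zero_add]
      congr 1
      exact Finset.sum_congr rfl fun v' _ => by rw [hE' v v']
    rw [hfirst, hsecond]
  -- the two eigenvalue-count bounds
  obtain ⟨W₁, hW₁rank, hW₁neg⟩ := exists_negdef _ hHermS
  obtain ⟨U₁, hU₁rank, hU₁pos⟩ := exists_psd _ hHermS
  have hlow : (k - 1) + iNeg (distSqMatrix (G.induce S)) ≤ iNeg (distSqMatrix G) := by
    have hneg : ∀ x ∈ Submodule.map (glue e) ((LinearMap.ker (sumLin k)).prod W₁), x ≠ 0 →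
        x ⬝ᵥ (distSqMatrix G) *ᵥ x < 0 := by
      rintro x hx hne
      obtain ⟨⟨c, u⟩, hcu, rfl⟩ := hx
      obtain ⟨hc, hu⟩ := hcu
      have hc0 : (∑ i, c i) = 0 := hc
      rw [hquad c u hc0]
      have t1 : -4 * (∑ i, c i ^ 2) ≤ 0 := by
        have : (0:ℝ) ≤ ∑ i, c i ^ 2 := Finset.sum_nonneg fun i _ => sq_nonneg _
        nlinarith
      by_cases hu0 : u = 0
      · have hcne : c ≠ 0 := by
          intro hc0'
          exact hne (by rw [hc0', hu0]; exact map_zero _)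
        have t2 : u ⬝ᵥ (distSqMatrix (G.induce S)) *ᵥ u = 0 := by
          rw [hu0]
          simp
        have t3 : (0:ℝ) < ∑ i, c i ^ 2 := by
          obtain ⟨i0, hi0⟩ := Function.ne_iff.mp hcne
          apply Finset.sum_pos' (fun i _ => sq_nonneg _)
          exact ⟨i0, Finset.mem_univ _,
            lt_of_le_of_ne (sq_nonneg _) (Ne.symm (pow_ne_zero 2 hi0))⟩
        nlinarith
      · have t2 : u ⬝ᵥ (distSqMatrix (G.induce S)) *ᵥ u < 0 := hW₁neg u hu hu0
        linarith
    have hrank : Module.finrank ℝ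
        (Submodule.map (glue e) ((LinearMap.ker (sumLin k)).prod W₁))
        = (k - 1) + iNeg (distSqMatrix (G.induce S)) := by
      rw [← LinearEquiv.finrank_eq (Submodule.equivMapOfInjective _ (glue_inj e) _),
        finrank_prod_sub, finrank_ker_sumLin hk, hW₁rank]
    have := finrank_le_of_negdef _ hHermG _ hneg
    omega
  have hup : iNeg (distSqMatrix G) ≤ k + iNeg (distSqMatrix (G.induce S)) := by
    have hpos : ∀ x ∈ Submodule.map (glue e) ((⊥ : Submodule ℝ (Fin k → ℝ)).prod U₁),
        0 ≤ x ⬝ᵥ (distSqMatrix G) *ᵥ x := by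
      rintro x hx
      obtain ⟨⟨c, u⟩, hcu, rfl⟩ := hx
      obtain ⟨hc, hu⟩ := hcu
      have hc0 : c = 0 := hc
      subst hc0
      rw [hquad 0 u (by simp)]
      have := hU₁pos u hu
      simp only [Pi.zero_apply]
      have hz : (∑ i : Fin k, (0:ℝ) ^ 2) = 0 := by simp
      rw [hz]
      linarith
    have hrank : Module.finrank ℝ
        (Submodule.map (glue e) ((⊥ : Submodule ℝ (Fin k → ℝ)).prod U₁))
        = Module.finrank ℝ U₁ := by
      rw [← LinearEquiv.finrank_eq (Submodule.equivMapOfInjective _ (glue_inj e) _),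
        finrank_prod_sub, finrank_bot]
      omega
    have hfin := finrank_add_iNeg_le_of_psd _ hHermG _ hpos
    rw [hrank, Fintype.card_fin] at hfin
    omega
  have hgoal : iNeg (distSqMatrix (G.induce {v : Fin n | ∀ i : Fin k, v ≠ p i}))
      = iNeg (distSqMatrix (G.induce S)) := rfl
  rw [hgoal]
  omega
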